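/- (Characterization of the Filippov combination.) Let α : D → ℝ^{n-1}, D = {((p,q),(r,s)) ∈ ℝⁿ × ℝⁿ : q·s ≤ 0, q ≠ s}, satisfy: (1) α((p,q),(r,s)) = A(q,s)·p + B(q,s)·r with A, B matrix-valued and 0-homogeneous in (q,s); (2) α vanishes on linearly dependent pairs; (3) for all p and sequences (qₘ, sₘ) → (0,0) with qₘsₘ ≤ 0, qₘ ≠ sₘ, α((p,qₘ),(p,sₘ)) → p. Then α((p,q),(r,s)) = (s/(s−q))·p + (q/(q−s))·r for all ((p,q),(r,s)) ∈ D. -/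

import Mathlib

/-- Characterization of the Filippov combination: the structure, 0-homogeneity,
vanishing on linearly dependent pairs, and consistency with the continuous case force
α((p,q),(r,s)) = (s/(s−q))·p + (q/(q−s))·r on the sliding domain. -/
theorem stmt13 (m : ℕ)
    (α : ((Fin m → ℝ) × ℝ) → ((Fin m → ℝ) × ℝ) → (Fin m → ℝ))
    (A B : ℝ → ℝ → ((Fin m → ℝ) →ₗ[ℝ] (Fin m → ℝ)))
    (hstruct : ∀ (p r : Fin m → ℝ) (q s : ℝ), q * s ≤ 0 → q ≠ s →
      α (p, q) (r, s) = A q s p + B q s r)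
    (hhom : ∀ (k q s : ℝ), 0 < k → q * s ≤ 0 → q ≠ s →
      A (k * q) (k * s) = A q s ∧ B (k * q) (k * s) = B q s)
    (hdep : ∀ (p r : Fin m → ℝ) (q s : ℝ), q * s ≤ 0 → q ≠ s →
      (∃ a b : ℝ, (a ≠ 0 ∨ b ≠ 0) ∧
        a • ((p, q) : (Fin m → ℝ) × ℝ) + b • ((r, s) : (Fin m → ℝ) × ℝ) = 0) →
      α (p, q) (r, s) = 0)
    (hlim : ∀ (p : Fin m → ℝ) (qm sm : ℕ → ℝ),
      Filter.Tendsto qm Filter.atTop (nhds 0) →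
      Filter.Tendsto sm Filter.atTop (nhds 0) →
      (∀ k, qm k * sm k ≤ 0 ∧ qm k ≠ sm k) →
      Filter.Tendsto (fun k => α (p, qm k) (p, sm k)) Filter.atTop (nhds p)) :
    ∀ (p r : Fin m → ℝ) (q s : ℝ), q * s ≤ 0 → q ≠ s →
      α (p, q) (r, s) = (s / (s - q)) • p + (q / (q - s)) • r := by
  -- Step 1: A q s + B q s = id, from homogeneity and the limit condition.
  have hsum : ∀ (q s : ℝ), q * s ≤ 0 → q ≠ s → ∀ p, A q s p + B q s p = p := by
    intro q s hqs hne p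
    have hq0 : Filter.Tendsto (fun k : ℕ => (1/((k:ℝ)+1)) * q) Filter.atTop (nhds 0) := by
      simpa using tendsto_one_div_add_atTop_nhds_zero_nat.mul_const q
    have hs0 : Filter.Tendsto (fun k : ℕ => (1/((k:ℝ)+1)) * s) Filter.atTop (nhds 0) := by
      simpa using tendsto_one_div_add_atTop_nhds_zero_nat.mul_const s
    have hcond : ∀ k : ℕ, (1/((k:ℝ)+1)) * q * ((1/((k:ℝ)+1)) * s) ≤ 0 ∧
        (1/((k:ℝ)+1)) * q ≠ (1/((k:ℝ)+1)) * s := by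
      intro k
      have hk : (0:ℝ) < 1/((k:ℝ)+1) := by positivity
      constructor
      · have h : (1/((k:ℝ)+1)) * q * ((1/((k:ℝ)+1)) * s) = (1/((k:ℝ)+1))^2 * (q*s) := by
          ring
        rw [h]
        exact mul_nonpos_iff.mpr (Or.inl ⟨by positivity, hqs⟩)
      · exact fun h => hne (mul_left_cancel₀ (ne_of_gt hk) h)
    have hlim' := hlim p _ _ hq0 hs0 hcond
    have hc : (fun k : ℕ => α (p, (1/((k:ℝ)+1)) * q) (p, (1/((k:ℝ)+1)) * s)) =
        fun _ : ℕ => A q s p + B q s p := by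
      funext k
      have hk : (0:ℝ) < 1/((k:ℝ)+1) := by positivity
      rw [hstruct p p _ _ (hcond k).1 (hcond k).2,
        (hhom _ q s hk hqs hne).1, (hhom _ q s hk hqs hne).2]
    rw [hc] at hlim'
    exact tendsto_nhds_unique tendsto_const_nhds hlim'
  intro p r q s hqs hne
  rw [hstruct p r q s hqs hne]
  rcases eq_or_ne q 0 with hq | hq
  · -- q = 0, s ≠ 0
    subst hq
    have hs : s ≠ 0 := fun h => hne (h ▸ rfl)
    have hB : ∀ v : Fin m → ℝ, B 0 s v = 0 := by
      intro v
      have h := hdep 0 v 0 s hqs hne ⟨1, 0, Or.inl one_ne_zero, by simp⟩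
      rw [hstruct 0 v 0 s hqs hne] at h
      simpa using h
    have hA : A 0 s p = p := by
      have h := hsum 0 s hqs hne p
      rw [hB] at h; simpa using h
    rw [hA, hB]
    simp [sub_zero, div_self hs]
  rcases eq_or_ne s 0 with hs | hs
  · -- s = 0, q ≠ 0
    subst hs
    have hA : ∀ v : Fin m → ℝ, A q 0 v = 0 := by
      intro v
      have h := hdep v 0 q 0 hqs hne ⟨0, 1, Or.inr one_ne_zero, by simp⟩
      rw [hstruct v 0 q 0 hqs hne] at h
      simpa using h
    have hB : B q 0 r = r := by
      have h := hsum q 0 hqs hne r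
      rw [hA] at h; simpa using h
    rw [hA, hB]
    simp [sub_zero, div_self hq]
  · -- q ≠ 0, s ≠ 0
    have hqs' : q - s ≠ 0 := sub_ne_zero.mpr hne
    have hsq' : s - q ≠ 0 := sub_ne_zero.mpr (Ne.symm hne)
    have hB : ∀ v : Fin m → ℝ, B q s v = (q/(q-s)) • v := by
      intro v
      have h := hdep v ((s/q) • v) q s hqs hne
        ⟨-(s/q), 1, Or.inr one_ne_zero, by
          refine Prod.ext ?_ ?_
          · show (-(s/q)) • v + (1:ℝ) • ((s/q) • v) = 0
            module
          · show (-(s/q)) * q + 1 * s = 0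
            field_simp
            ring⟩
      rw [hstruct v ((s/q) • v) q s hqs hne, map_smul] at h
      have h2 := hsum q s hqs hne v
      have h3 : (1 - s/q) • B q s v = v := by
        rw [sub_smul, one_smul]
        calc B q s v - (s/q) • B q s v
            = (A q s v + B q s v) - (A q s v + (s/q) • B q s v) := by abel
          _ = v - 0 := by rw [h2, h]
          _ = v := sub_zero v
      have hcoef : (q/(q-s)) * (1 - s/q) = 1 := by
        field_simp
      calc B q s v = (q/(q-s)) • ((1 - s/q) • B q s v) := by
            rw [smul_smul, hcoef, one_smul]
        _ = (q/(q-s)) • v := by rw [h3]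
    have hA : A q s p = (s/(s-q)) • p := by
      have h2 := hsum q s hqs hne p
      have hA' : A q s p = p - B q s p := by rw [eq_sub_iff_add_eq]; exact h2
      rw [hA', hB]
      have e : (s/(s-q)) • p = (1 - q/(q-s)) • p := by
        congr 1
        field_simp
        ring
      rw [e, sub_smul, one_smul]
    rw [hA, hB]
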